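/- For N ≥ 1, the N×N matrix S^{IV} with entries S^{IV}_{kn} = √(2/N) sin((π/N)(n + 1/2)(k + 1/2)), k,n = 0,…,N−1, is orthogonal: (S^{IV})ᵀ S^{IV} = I. -/

import Mathlib

open Real Finset

lemma cos_sum_zero (N : ℕ) (hN : 1 ≤ N) (m : ℤ) (hm : m ≠ 0) (hm2 : |m| < 2*N) :
    ∑ r ∈ Finset.range N, Real.cos (π * m / N * ((r : ℝ) + 1/2)) = 0 := by
  have hNpos : (0:ℝ) < N := by exact_mod_cast hN
  set ω : ℝ := π * m / N with hω
  have habs : |(m:ℝ)| < 2*N := by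
    rw [← Int.cast_abs]
    exact_mod_cast hm2
  have hsin : Real.sin (ω/2) ≠ 0 := by
    have hx : ω/2 = π * m / (2*N) := by rw [hω]; ring
    rw [hx]
    have hb : |π * m / (2*N)| < π := by
      rw [abs_div, abs_mul, abs_of_pos Real.pi_pos, abs_of_pos (by positivity : (0:ℝ) < 2*N),
        div_lt_iff₀ (by positivity)]
      nlinarith [Real.pi_pos]
    intro h
    have h0 := (Real.sin_eq_zero_iff_of_lt_of_lt (by linarith [(abs_lt.mp hb).1])
      (abs_lt.mp hb).2).mp h
    have hπ := Real.pi_ne_zero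
    have : (m:ℝ) = 0 := by
      field_simp at h0
      all_goals first | exact h0 | exact_mod_cast h0 | simpa using h0
    exact hm (by exact_mod_cast this)
  have tele : ∑ r ∈ Finset.range N, (Real.sin (ω*((r:ℝ)+1)) - Real.sin (ω*r)) =
      Real.sin (ω*N) - Real.sin (ω*0) := by
    have := Finset.sum_range_sub (f := fun r : ℕ => Real.sin (ω*r)) N
    simpa using this
  have hωN : Real.sin (ω*N) = 0 := by
    have : ω*N = (m:ℝ)*π := by rw [hω]; field_simp
    rw [this, Real.sin_int_mul_pi]
  have key : (∑ r ∈ Finset.range N, Real.cos (ω*((r:ℝ)+1/2))) * (2*Real.sin (ω/2)) = 0 := by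
    rw [Finset.sum_mul]
    have heq : ∀ r : ℕ, Real.cos (ω*((r:ℝ)+1/2)) * (2*Real.sin (ω/2)) =
        Real.sin (ω*((r:ℝ)+1)) - Real.sin (ω*r) := by
      intro r
      rw [Real.sin_sub_sin]
      have e1 : (ω*((r:ℝ)+1) - ω*r)/2 = ω/2 := by ring
      have e2 : (ω*((r:ℝ)+1) + ω*r)/2 = ω*((r:ℝ)+1/2) := by ring
      rw [e1, e2]; ring
    rw [Finset.sum_congr rfl (fun r _ => heq r), tele, hωN]
    first | simp | skip
  have h2 : (2*Real.sin (ω/2)) ≠ 0 := by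
    intro h; apply hsin; linarith [h]
  have := mul_eq_zero.mp key
  rcases this with h | h
  · convert h using 2 with r
    all_goals ring
  · exact absurd h h2


lemma sin_mul_sin' (A B : ℝ) :
    Real.sin A * Real.sin B = (Real.cos (A-B) - Real.cos (A+B))/2 := by
  rw [Real.cos_sub_cos]
  have e1 : ((A-B)+(A+B))/2 = A := by ring
  have e2 : ((A-B)-(A+B))/2 = -B := by ring
  rw [e1, e2, Real.sin_neg]; ring


/-- The type-IV Discrete Sine Transform matrix is orthogonal. -/
theorem stmt17 (N : ℕ) (hN : 1 ≤ N) :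
    let S : Matrix (Fin N) (Fin N) ℝ := fun k n =>
      Real.sqrt (2 / N) * Real.sin (π / N * ((n : ℝ) + 1/2) * ((k : ℝ) + 1/2))
    S.transpose * S = 1 := by
  intro S
  have hNpos : (0:ℝ) < N := by exact_mod_cast hN
  ext j k
  rw [Matrix.mul_apply, Matrix.one_apply]
  have hsq : Real.sqrt (2/(N:ℝ)) * Real.sqrt (2/(N:ℝ)) = 2/N :=
    Real.mul_self_sqrt (by positivity)
  have hterm : ∀ r : Fin N, S.transpose j r * S r k =
      (1/N) * (Real.cos (π * ((j:ℝ)-(k:ℝ)) / N * ((r:ℝ)+1/2))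
             - Real.cos (π * ((j:ℝ)+(k:ℝ)+1) / N * ((r:ℝ)+1/2))) := by
    intro r
    show (Real.sqrt (2/(N:ℝ)) * Real.sin (π/N*((j:ℝ)+1/2)*((r:ℝ)+1/2))) *
         (Real.sqrt (2/(N:ℝ)) * Real.sin (π/N*((k:ℝ)+1/2)*((r:ℝ)+1/2))) = _
    rw [mul_mul_mul_comm, hsq, sin_mul_sin']
    have e1 : π/N*((j:ℝ)+1/2)*((r:ℝ)+1/2) - π/N*((k:ℝ)+1/2)*((r:ℝ)+1/2)
        = π * ((j:ℝ)-(k:ℝ)) / N * ((r:ℝ)+1/2) := by ring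
    have e2 : π/N*((j:ℝ)+1/2)*((r:ℝ)+1/2) + π/N*((k:ℝ)+1/2)*((r:ℝ)+1/2)
        = π * ((j:ℝ)+(k:ℝ)+1) / N * ((r:ℝ)+1/2) := by ring
    rw [e1, e2]; ring
  rw [Finset.sum_congr rfl (fun r _ => hterm r), ← Finset.mul_sum, Finset.sum_sub_distrib]
  have hsum2 : ∑ r : Fin N, Real.cos (π * ((j:ℝ)+(k:ℝ)+1) / N * ((r:ℝ)+1/2)) = 0 := by
    have h := cos_sum_zero N hN ((j:ℤ)+(k:ℤ)+1) (by positivity) (by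
      rw [abs_of_pos (by positivity)]
      have := j.isLt; have := k.isLt; push_cast; omega)
    rw [Fin.sum_univ_eq_sum_range (fun r : ℕ => Real.cos (π * ((j:ℝ)+(k:ℝ)+1) / N * ((r:ℝ)+1/2)))]
    rw [← h]
    apply Finset.sum_congr rfl
    intro r _
    push_cast
    ring_nf
  by_cases hjk : j = k
  · subst hjk
    rw [if_pos rfl, hsum2]
    have hsum1 : ∑ r : Fin N, Real.cos (π * ((j:ℝ)-(j:ℝ)) / N * ((r:ℝ)+1/2)) = N := by
      simp
    rw [hsum1]
    field_simp
    simp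
  · rw [if_neg hjk, hsum2]
    have hsum1 : ∑ r : Fin N, Real.cos (π * ((j:ℝ)-(k:ℝ)) / N * ((r:ℝ)+1/2)) = 0 := by
      have hm : (j:ℤ) - (k:ℤ) ≠ 0 := by
        intro h; apply hjk; have : (j:ℤ) = k := by omega
        exact Fin.ext (by exact_mod_cast this)
      have h := cos_sum_zero N hN ((j:ℤ)-(k:ℤ)) hm (by
        have := j.isLt; have := k.isLt
        rw [abs_lt]; constructor <;> push_cast <;> omega)
      rw [Fin.sum_univ_eq_sum_range (fun r : ℕ => Real.cos (π * ((j:ℝ)-(k:ℝ)) / N * ((r:ℝ)+1/2)))]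
      rw [← h]
      apply Finset.sum_congr rfl
      intro r _
      push_cast
      ring_nf
    rw [hsum1]
    simp
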